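/- Let φ ∈ ℂ[z] be a polynomial of degree d ≥ 2 with filled Julia set F ⊂ ℂ, let λ be a logarithmic distance function for F, and let {S_n} be a sequence of finite subsets of ℂ that is λ-taut. Then {S_n} is F-tight. -/

import Mathlib

open Filter

/-- `log⁺ t = log (max t 1)`. -/
noncomputable def logPlus (t : ℝ) : ℝ := Real.log (max t 1)

/-- The `n`-th iterate of the polynomial map `z ↦ φ(z)`. -/
noncomputable def polyIter {L : Type*} [CommRing L] (φ : Polynomial L) (n : ℕ) : L → L :=
  (fun w => Polynomial.eval w φ)^[n]

/-- The filled Julia set of the polynomial `φ` over a normed field. -/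
noncomputable def filledJulia {L : Type*} [NormedField L] (φ : Polynomial L) : Set L :=
  {z : L | ¬ Tendsto (fun n : ℕ => ‖polyIter φ n z‖) atTop atTop}

/-- `λ` is a logarithmic distance function for `F ⊆ L`: continuous, vanishing exactly
on `F`, positive off `F`, and within bounded distance of `log⁺‖·‖`. -/
structure IsLogDistFun {L : Type*} [NormedField L] (F : Set L) (lam : L → ℝ) : Prop where
  continuous : Continuous lam
  eq_zero : ∀ z ∈ F, lam z = 0
  pos : ∀ z ∉ F, 0 < lam z
  bounded : ∃ C : ℝ, ∀ z : L, |lam z - logPlus ‖z‖| ≤ C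

/-- A sequence of finite sets is `λ`-taut if the average of `λ` over `S n` tends to `0`. -/
def IsTaut {L : Type*} (S : ℕ → Finset L) (lam : L → ℝ) : Prop :=
  Tendsto (fun n => ((S n).card : ℝ)⁻¹ * ∑ z ∈ S n, lam z) atTop (nhds 0)

/-- A sequence of finite sets is `F`-tight if for all `δ, ε > 0`, eventually at least a
`(1-ε)`-fraction of the points of `S n` lie within distance `δ` of `F`. -/
def IsTight {L : Type*} [NormedField L] (S : ℕ → Finset L) (F : Set L) : Prop :=
  ∀ δ > (0 : ℝ), ∀ ε > (0 : ℝ), ∃ N : ℕ, ∀ n ≥ N,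
    (1 - ε) * ((S n).card : ℝ) ≤
      (((S n : Set L)) ∩ {z : L | Metric.infDist z F ≤ δ}).ncard

/-- If `φ ∈ ℂ[z]` has degree `d ≥ 2` with filled Julia set `F`, `λ` is a
logarithmic distance function for `F`, and `{S_n}` is a `λ`-taut sequence of finite subsets
of `ℂ`, then `{S_n}` is `F`-tight. -/
theorem stmt12 (φ : Polynomial ℂ) (hd : 2 ≤ φ.natDegree)
    (lam : ℂ → ℝ) (hlam : IsLogDistFun (filledJulia φ) lam)
    (S : ℕ → Finset ℂ) (htaut : IsTaut S lam) :
    IsTight S (filledJulia φ) := by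
  classical
  obtain ⟨C, hC⟩ := hlam.bounded
  set F := filledJulia φ with hF
  -- F is nonempty: φ has a fixed point
  have hFne : F.Nonempty := by
    have hdeg : (φ - Polynomial.X).natDegree = φ.natDegree := by
      apply Polynomial.natDegree_sub_eq_left_of_natDegree_lt
      simpa using lt_of_lt_of_le (by norm_num) hd
    have hpos : 0 < (φ - Polynomial.X).degree := by
      rw [Polynomial.natDegree_pos_iff_degree_pos.symm, hdeg]; omega
    obtain ⟨z, hz⟩ := Complex.exists_root hpos
    have hfix : Polynomial.eval z φ = z := by
      have := hz
      simp [Polynomial.IsRoot, Polynomial.eval_sub, sub_eq_zero] at this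
      exact this
    refine ⟨z, ?_⟩
    intro h
    have hiter : ∀ n, polyIter φ n z = z := fun n =>
      Function.iterate_fixed hfix n
    have h' : Tendsto (fun _ : ℕ => ‖z‖) atTop atTop := by
      refine h.congr fun n => by rw [hiter n]
    obtain ⟨n, hn⟩ := (h'.eventually (eventually_gt_atTop ‖z‖)).exists
    exact lt_irrefl _ hn
  have lam_nonneg : ∀ z, 0 ≤ lam z := by
    intro z
    by_cases hz : z ∈ F
    · rw [hlam.eq_zero z hz]
    · exact (hlam.pos z hz).le
  intro δ hδ ε hε
  have hC0 : 0 ≤ C := le_trans (abs_nonneg _) (hC 0)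
  set R := Real.exp (C + 1) with hR
  -- lower bound on lam for large norm
  have hfar : ∀ z : ℂ, R ≤ ‖z‖ → (1 : ℝ) ≤ lam z := by
    intro z hz
    have h1 : (1 : ℝ) < R := by
      rw [hR]; calc (1:ℝ) = Real.exp 0 := (Real.exp_zero).symm
        _ < Real.exp (C + 1) := Real.exp_lt_exp.2 (by linarith)
    have hlog : C + 1 ≤ logPlus ‖z‖ := by
      rw [logPlus, max_eq_left (le_trans h1.le hz)]
      calc C + 1 = Real.log R := (Real.log_exp _).symm
        _ ≤ Real.log ‖z‖ := Real.log_le_log (Real.exp_pos _) hz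
    have := hC z
    rw [abs_le] at this
    linarith [this.1]
  -- compact set argument
  set K := Metric.closedBall (0 : ℂ) R ∩ {z : ℂ | δ ≤ Metric.infDist z F} with hK
  have hKc : IsCompact K :=
    (isCompact_closedBall 0 R).inter_right
      (isClosed_le continuous_const (Metric.continuous_infDist_pt F))
  have key : ∃ m : ℝ, 0 < m ∧ ∀ z : ℂ, δ ≤ Metric.infDist z F → m ≤ lam z := by
    have hnotF : ∀ z : ℂ, δ ≤ Metric.infDist z F → z ∉ F := by
      intro z hz hzF
      rw [Metric.infDist_zero_of_mem hzF] at hz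
      linarith
    by_cases hKne : K.Nonempty
    · obtain ⟨z0, hz0K, hz0min⟩ := hKc.exists_isMinOn hKne hlam.continuous.continuousOn
      refine ⟨min (lam z0) 1, lt_min (hlam.pos z0 (hnotF z0 hz0K.2)) one_pos, ?_⟩
      intro z hz
      by_cases hzR : ‖z‖ ≤ R
      · have hmem : z ∈ K := ⟨by simpa [Metric.mem_closedBall, Complex.dist_eq] using hzR, hz⟩
        exact le_trans (min_le_left _ _) (hz0min hmem)
      · exact le_trans (min_le_right _ _) (hfar z (le_of_not_ge hzR))
    · refine ⟨1, one_pos, ?_⟩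
      intro z hz
      by_cases hzR : ‖z‖ ≤ R
      · exact absurd ⟨by simpa [Metric.mem_closedBall, Complex.dist_eq] using hzR, hz⟩
          (fun h => hKne ⟨z, h⟩)
      · exact hfar z (le_of_not_ge hzR)
  obtain ⟨m, hm0, hm⟩ := key
  have hev : ∀ᶠ n in atTop,
      ((S n).card : ℝ)⁻¹ * ∑ z ∈ S n, lam z < ε * m :=
    htaut.eventually_lt_const (by positivity)
  obtain ⟨N, hN⟩ := eventually_atTop.1 hev
  refine ⟨N, fun n hn => ?_⟩
  have hGset : (((S n : Set ℂ)) ∩ {z : ℂ | Metric.infDist z F ≤ δ})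
      = ((S n).filter (fun z => Metric.infDist z F ≤ δ) : Finset ℂ) := by
    ext z; simp [Finset.mem_filter]
  rw [hGset, Set.ncard_coe_finset]
  set B := (S n).filter (fun z => ¬ Metric.infDist z F ≤ δ) with hB
  set G := (S n).filter (fun z => Metric.infDist z F ≤ δ) with hG
  have hcard : G.card + B.card = (S n).card := Finset.card_filter_add_card_filter_not _
  by_cases hS0 : (S n).card = 0
  · rw [hS0]
    simp
  have hSpos : (0 : ℝ) < (S n).card := by positivity
  have hsum : m * (B.card : ℝ) ≤ ∑ z ∈ S n, lam z := by
    calc m * (B.card : ℝ) = ∑ _z ∈ B, m := by rw [Finset.sum_const, nsmul_eq_mul, mul_comm]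
      _ ≤ ∑ z ∈ B, lam z := by
          refine Finset.sum_le_sum fun z hz => ?_
          rw [hB, Finset.mem_filter] at hz
          exact hm z (le_of_not_ge hz.2)
      _ ≤ ∑ z ∈ S n, lam z := Finset.sum_le_sum_of_subset_of_nonneg
          (Finset.filter_subset _ _) (fun z _ _ => lam_nonneg z)
  have havg := hN n hn
  have hsum' : ∑ z ∈ S n, lam z < ε * m * (S n).card := by
    have := (mul_lt_mul_iff_of_pos_right hSpos).2 havg
    rw [mul_comm (((S n).card : ℝ)⁻¹) _, mul_assoc, inv_mul_cancel₀ (ne_of_gt hSpos),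
      mul_one] at this
    linarith
  have hBcard : (B.card : ℝ) < ε * (S n).card := by
    have : m * (B.card : ℝ) < ε * m * (S n).card := lt_of_le_of_lt hsum hsum'
    nlinarith
  have : (G.card : ℝ) = (S n).card - B.card := by
    have := hcard
    push_cast [← this]
    ring
  rw [this]
  nlinarith
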